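/- Let (X,·,d) be a group which is complete and metric invariant (d(x·y, x·z) = d(y·x, z·x) = d(y,z) for all x,y,z), and let a ∈ X. Let f and g be two proper lower semicontinuous functions on X with values in ℝ ∪ {+∞}. Then the following are equivalent: (I) the map x ↦ (f ⊕ g)(x) has a strong minimum at a; (II) there exists (ỹ, z̃) ∈ X×X with ỹ·z̃ = a such that f has a strong minimum at ỹ and g has a strong minimum at z̃. -/

import Mathlib

/-- Inf-convolution for functions with values in `ℝ ∪ {+∞}` (modelled in `EReal`)
on a group: `(f ⊕ g)(x) = inf { f y + g z : y * z = x }`. -/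
noncomputable def infConvE {X : Type*} [Mul X] (f g : X → EReal) : X → EReal :=
  fun x => sInf {r : EReal | ∃ y z : X, y * z = x ∧ r = f y + g z}

/-- A function `h : X → ℝ ∪ {+∞}` has a strong minimum at `x₀`: `h x₀` is finite,
is the infimum of `h`, and for every `ε > 0` there is `δ > 0` such that
`h x ≤ h x₀ + δ` implies `d(x, x₀) ≤ ε`. -/
def EStrongMin {X : Type*} [MetricSpace X] (h : X → EReal) (x₀ : X) : Prop :=
  h x₀ ≠ ⊤ ∧ h x₀ ≠ ⊥ ∧ (∀ x, h x₀ ≤ h x) ∧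
    ∀ ε : ℝ, 0 < ε → ∃ δ : ℝ, 0 < δ ∧ ∀ x, h x ≤ h x₀ + (δ : EReal) → dist x x₀ ≤ ε

lemma infConvE_le {X : Type*} [Mul X] (f g : X → EReal) (y z : X) :
    infConvE f g (y * z) ≤ f y + g z :=
  sInf_le ⟨y, z, rfl, rfl⟩

lemma aux_ne_top {u v : EReal} (hv : v ≠ ⊥) {c : EReal} (h : u + v < c) : u ≠ ⊤ := by
  intro hu
  rw [hu, EReal.top_add_of_ne_bot hv] at h
  exact not_top_lt h

lemma aux_exists_real_lt {u : EReal} (hu : u ≠ ⊥) : ∃ r : ℝ, (r : EReal) < u := by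
  obtain ⟨r, _, hr⟩ := EReal.lt_iff_exists_real_btwn.1 (bot_lt_iff_ne_bot.2 hu)
  exact ⟨r, hr⟩

lemma aux_split {u v : EReal} (hu : u ≠ ⊥) (hv : v ≠ ⊥) {c : ℝ} (h : (c : EReal) < u + v) :
    ∃ r s : ℝ, (r : EReal) < u ∧ (s : EReal) < v ∧ c < r + s := by
  by_cases hut : u = ⊤
  · obtain ⟨s, hs⟩ := aux_exists_real_lt hv
    exact ⟨c - s + 1, s, by rw [hut]; exact EReal.coe_lt_top _, hs, by linarith⟩
  by_cases hvt : v = ⊤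
  · obtain ⟨r, hr⟩ := aux_exists_real_lt hu
    exact ⟨r, c - r + 1, hr, by rw [hvt]; exact EReal.coe_lt_top _, by linarith⟩
  · set ub := u.toReal with hub
    set vb := v.toReal with hvb
    have hu' : (ub : EReal) = u := EReal.coe_toReal hut hu
    have hv' : (vb : EReal) = v := EReal.coe_toReal hvt hv
    rw [← hu', ← hv'] at h
    have hc : c < ub + vb := by exact_mod_cast h
    refine ⟨ub - (ub + vb - c) / 3, vb - (ub + vb - c) / 3, ?_, ?_, by linarith⟩
    · rw [← hu']; exact_mod_cast by linarith
    · rw [← hv']; exact_mod_cast by linarith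

theorem strongMin_infConv_iff_group {X : Type*} [Group X] [MetricSpace X] [CompleteSpace X]
    (hleft : ∀ x y z : X, dist (x * y) (x * z) = dist y z)
    (hright : ∀ x y z : X, dist (y * x) (z * x) = dist y z)
    (a : X) (f g : X → EReal)
    (hfbot : ∀ x, f x ≠ ⊥) (hgbot : ∀ x, g x ≠ ⊥)
    (hfproper : ∃ x, f x ≠ ⊤) (hgproper : ∃ x, g x ≠ ⊤)
    (hflsc : LowerSemicontinuous f) (hglsc : LowerSemicontinuous g) :
    EStrongMin (infConvE f g) a ↔
      ∃ ty tz : X, ty * tz = a ∧ EStrongMin f ty ∧ EStrongMin g tz := by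
  constructor
  · rintro ⟨hmt, hmb, hmin, hsm⟩
    set m : ℝ := (infConvE f g a).toReal with hmdef
    have hma : (m : EReal) = infConvE f g a := EReal.coe_toReal hmt hmb
    -- global lower bound
    have key : ∀ y z : X, (m : EReal) ≤ f y + g z := fun y z =>
      (hma.symm ▸ hmin (y * z)).trans (infConvE_le f g y z)
    -- minimizing sequence with y*z = a
    have sel : ∀ n : ℕ, ∃ yz : X × X, yz.1 * yz.2 = a ∧
        f yz.1 + g yz.2 < (m : EReal) + ((1 / (n + 1) : ℝ) : EReal) := by
      intro n
      have hlt : infConvE f g a < (m : EReal) + ((1 / (n + 1) : ℝ) : EReal) := by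
        rw [← hma, ← EReal.coe_add]
        exact_mod_cast lt_add_of_pos_right m (by positivity)
      obtain ⟨r, ⟨y, z, hyz, hr⟩, hrlt⟩ := sInf_lt_iff.1 hlt
      exact ⟨(y, z), hyz, hr ▸ hrlt⟩
    choose yz hyza hyzlt using sel
    set y : ℕ → X := fun n => (yz n).1
    set z : ℕ → X := fun n => (yz n).2
    have hyza' : ∀ n, y n * z n = a := hyza
    have hfnt : ∀ n, f (y n) ≠ ⊤ := fun n => aux_ne_top (hgbot _) (hyzlt n)
    have hgnt : ∀ n, g (z n) ≠ ⊤ := fun n => by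
      have := (hyzlt n); rw [add_comm] at this; exact aux_ne_top (hfbot _) this
    set p : ℕ → ℝ := fun n => (f (y n)).toReal with hpdef
    set q : ℕ → ℝ := fun n => (g (z n)).toReal with hqdef
    have hp : ∀ n, (p n : EReal) = f (y n) := fun n => EReal.coe_toReal (hfnt n) (hfbot _)
    have hq : ∀ n, (q n : EReal) = g (z n) := fun n => EReal.coe_toReal (hgnt n) (hgbot _)
    have hpq : ∀ n, p n + q n < m + 1 / (n + 1) := by
      intro n
      have := hyzlt n
      rw [← hp n, ← hq n, ← EReal.coe_add, ← EReal.coe_add] at this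
      exact_mod_cast this
    have hmix : ∀ n k, m ≤ p n + q k := by
      intro n k
      have := key (y n) (z k)
      rw [← hp n, ← hq k, ← EReal.coe_add] at this
      exact_mod_cast this
    -- control of the mixed products
    have hcross : ∀ n k, infConvE f g (y n * z k) ≤
        ((m + 1 / (n + 1) + 1 / (k + 1) : ℝ) : EReal) := by
      intro n k
      refine (infConvE_le f g (y n) (z k)).trans ?_
      rw [← hp n, ← hq k, ← EReal.coe_add]
      have h1 := hpq n
      have h2 := hpq k
      have h3 := hmix k n
      have : p n + q k ≤ m + 1 / (n + 1) + 1 / (k + 1) := by linarith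
      exact_mod_cast this
    have hdista : ∀ ε : ℝ, 0 < ε → ∃ N : ℕ, ∀ n ≥ N, ∀ k ≥ N,
        dist (y n * z k) a ≤ ε := by
      intro ε hε
      obtain ⟨δ, hδ, hδctl⟩ := hsm ε hε
      obtain ⟨N, hN⟩ := exists_nat_gt (2 / δ)
      refine ⟨N, fun n hn k hk => ?_⟩
      have hbound : ∀ j : ℕ, N ≤ j → 1 / ((j : ℝ) + 1) ≤ δ / 2 := by
        intro j hj
        have h1 : (2 / δ : ℝ) < (j : ℝ) + 1 := by
          calc (2 / δ : ℝ) < N := hN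
          _ ≤ (j : ℝ) := by exact_mod_cast hj
          _ ≤ (j : ℝ) + 1 := by linarith
        rw [div_le_div_iff₀ (by positivity) (by norm_num)]
        have h2 : 0 < (j : ℝ) + 1 := by positivity
        rw [div_lt_iff₀ hδ] at h1
        linarith
      refine hδctl _ ((hcross n k).trans ?_)
      rw [← hma, ← EReal.coe_add]
      have hb1 := hbound n hn
      have hb2 := hbound k hk
      have : m + 1 / ((n:ℝ) + 1) + 1 / ((k:ℝ) + 1) ≤ m + δ := by linarith
      exact_mod_cast this
    -- Cauchy sequences
    have hcy : CauchySeq y := by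
      rw [Metric.cauchySeq_iff]
      intro ε hε
      obtain ⟨N, hN⟩ := hdista (ε / 2) (by positivity)
      refine ⟨N, fun n hn k hk => ?_⟩
      have : dist (y n) (y k) = dist (y n * z k) a := by
        rw [← hyza' k]; exact (hright (z k) (y n) (y k)).symm
      rw [this]
      exact lt_of_le_of_lt (hN n hn k hk) (by linarith)
    have hcz : CauchySeq z := by
      rw [Metric.cauchySeq_iff]
      intro ε hε
      obtain ⟨N, hN⟩ := hdista (ε / 2) (by positivity)
      refine ⟨N, fun n hn k hk => ?_⟩
      have : dist (z n) (z k) = dist (y n * z k) a := by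
        rw [← hyza' n, hleft, dist_comm]
      rw [this]
      exact lt_of_le_of_lt (hN n hn k hk) (by linarith)
    obtain ⟨ty, hty⟩ := cauchySeq_tendsto_of_complete hcy
    obtain ⟨tz, htz⟩ := cauchySeq_tendsto_of_complete hcz
    have htyd := (Metric.tendsto_atTop.1 hty)
    have htzd := (Metric.tendsto_atTop.1 htz)
    -- ty * tz = a
    have hab : ty * tz = a := by
      have hdle : ∀ ε : ℝ, 0 < ε → dist (ty * tz) a ≤ 0 + ε := by
        intro ε hε
        obtain ⟨N1, hN1⟩ := htyd (ε / 2) (by positivity)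
        obtain ⟨N2, hN2⟩ := htzd (ε / 2) (by positivity)
        set n := max N1 N2
        have h1 := hN1 n (le_max_left _ _)
        have h2 := hN2 n (le_max_right _ _)
        calc dist (ty * tz) a = dist (ty * tz) (y n * z n) := by rw [hyza' n]
          _ ≤ dist (ty * tz) (ty * z n) + dist (ty * z n) (y n * z n) := dist_triangle _ _ _
          _ = dist tz (z n) + dist ty (y n) := by rw [hleft, hright]
          _ ≤ 0 + ε := by rw [dist_comm tz, dist_comm ty]; linarith
      exact eq_of_dist_eq_zero (le_antisymm (le_of_forall_pos_le_add hdle) dist_nonneg)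
    -- value at the limit
    have hsumub : f ty + g tz ≤ (m : EReal) := by
      by_contra hcon
      push_neg at hcon
      obtain ⟨r, s, hr, hs, hrs⟩ := aux_split (hfbot ty) (hgbot tz) hcon
      have hev1 : ∀ᶠ n in Filter.atTop, (r : EReal) < f (y n) :=
        hty.eventually (hflsc ty _ hr)
      have hev2 : ∀ᶠ n in Filter.atTop, (s : EReal) < g (z n) :=
        htz.eventually (hglsc tz _ hs)
      have hev3 : ∀ᶠ n : ℕ in Filter.atTop, 1 / ((n : ℝ) + 1) < r + s - m := by
        have := tendsto_one_div_add_atTop_nhds_zero_nat (𝕜 := ℝ)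
        exact this.eventually_lt_const (by linarith)
      obtain ⟨n, h1, h2, h3⟩ := (hev1.and (hev2.and hev3)).exists
      rw [← hp n] at h1
      rw [← hq n] at h2
      have hr' : r < p n := by exact_mod_cast h1
      have hs' : s < q n := by exact_mod_cast h2
      have := hpq n
      linarith
    have hsum : f ty + g tz = (m : EReal) := le_antisymm hsumub (key ty tz)
    have hftyt : f ty ≠ ⊤ := by
      intro h
      rw [h, EReal.top_add_of_ne_bot (hgbot tz)] at hsum
      exact (EReal.coe_ne_top m) hsum.symm
    have hgtzt : g tz ≠ ⊤ := by
      intro h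
      rw [h, add_comm, EReal.top_add_of_ne_bot (hfbot ty)] at hsum
      exact (EReal.coe_ne_top m) hsum.symm
    set P : ℝ := (f ty).toReal with hPdef
    set Q : ℝ := (g tz).toReal with hQdef
    have hP : (P : EReal) = f ty := EReal.coe_toReal hftyt (hfbot ty)
    have hQ : (Q : EReal) = g tz := EReal.coe_toReal hgtzt (hgbot tz)
    have hPQ : P + Q = m := by
      have : ((P + Q : ℝ) : EReal) = (m : EReal) := by
        rw [EReal.coe_add, hP, hQ, hsum]
      exact_mod_cast this
    refine ⟨ty, tz, hab, ⟨hftyt, hfbot ty, ?_, ?_⟩, ⟨hgtzt, hgbot tz, ?_, ?_⟩⟩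
    · -- f min
      intro y'
      have h1 : (m : EReal) ≤ f y' + (Q : EReal) := hQ ▸ key y' tz
      have h2 : (P : EReal) + (Q : EReal) ≤ f y' + (Q : EReal) := by
        rw [← EReal.coe_add, hPQ]; exact h1
      rw [← hP]
      exact ((EReal.addLECancellable_coe Q).add_le_add_iff_right).1 h2
    · -- f strong min
      intro ε hε
      obtain ⟨δ, hδ, hδctl⟩ := hsm ε hε
      refine ⟨δ, hδ, fun y' hle => ?_⟩
      have h1 : infConvE f g (y' * tz) ≤ infConvE f g a + (δ : EReal) := by
        refine (infConvE_le f g y' tz).trans ?_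
        rw [← hma, ← hQ, ← hP] at *
        calc f y' + (Q : EReal) ≤ ((P : EReal) + (δ : EReal)) + (Q : EReal) :=
              add_le_add_left hle _
          _ = ((P + δ + Q : ℝ) : EReal) := by norm_cast
          _ = (m : EReal) + (δ : EReal) := by norm_cast; linarith
      have := hδctl _ h1
      calc dist y' ty = dist (y' * tz) (ty * tz) := (hright tz y' ty).symm
        _ = dist (y' * tz) a := by rw [hab]
        _ ≤ ε := this
    · -- g min
      intro z'
      have h1 : (m : EReal) ≤ (P : EReal) + g z' := hP ▸ key ty z'
      have h2 : (Q : EReal) + (P : EReal) ≤ g z' + (P : EReal) := by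
        rw [← EReal.coe_add]
        rw [show Q + P = m by linarith, add_comm (P : EReal)] at *
        exact h1
      rw [← hQ]
      exact ((EReal.addLECancellable_coe P).add_le_add_iff_right).1 h2
    · -- g strong min
      intro ε hε
      obtain ⟨δ, hδ, hδctl⟩ := hsm ε hε
      refine ⟨δ, hδ, fun z' hle => ?_⟩
      have h1 : infConvE f g (ty * z') ≤ infConvE f g a + (δ : EReal) := by
        refine (infConvE_le f g ty z').trans ?_
        rw [← hma, ← hQ, ← hP] at *
        calc (P : EReal) + g z' ≤ (P : EReal) + ((Q : EReal) + (δ : EReal)) :=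
              add_le_add_right hle _
          _ = ((P + (Q + δ) : ℝ) : EReal) := by norm_cast
          _ = (m : EReal) + (δ : EReal) := by norm_cast; linarith
      have := hδctl _ h1
      calc dist z' tz = dist (ty * z') (ty * tz) := (hleft ty z' tz).symm
        _ = dist (ty * z') a := by rw [hab]
        _ ≤ ε := this
  · rintro ⟨ty, tz, hab, ⟨hft, hfb, hfmin, hfsm⟩, ⟨hgt, hgb, hgmin, hgsm⟩⟩
    set P : ℝ := (f ty).toReal with hPdef
    set Q : ℝ := (g tz).toReal with hQdef
    have hP : (P : EReal) = f ty := EReal.coe_toReal hft hfb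
    have hQ : (Q : EReal) = g tz := EReal.coe_toReal hgt hgb
    set m : ℝ := P + Q with hmdef
    have hmco : (m : EReal) = f ty + g tz := by rw [hmdef, EReal.coe_add, hP, hQ]
    have hlow : ∀ x, (m : EReal) ≤ infConvE f g x := by
      intro x
      refine le_sInf ?_
      rintro r ⟨y', z', -, rfl⟩
      rw [hmco]
      exact add_le_add (hfmin y') (hgmin z')
    have hup : infConvE f g a ≤ (m : EReal) :=
      sInf_le ⟨ty, tz, hab, hmco⟩
    have hma : infConvE f g a = (m : EReal) := le_antisymm hup (hlow a)
    refine ⟨by rw [hma]; exact EReal.coe_ne_top m, by rw [hma]; exact EReal.coe_ne_bot m,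
      fun x => hma ▸ hlow x, ?_⟩
    intro ε hε
    obtain ⟨δ1, hδ1, hf1⟩ := hfsm (ε / 2) (by positivity)
    obtain ⟨δ2, hδ2, hg2⟩ := hgsm (ε / 2) (by positivity)
    set δ : ℝ := min δ1 δ2 / 2 with hδdef
    have hδpos : 0 < δ := by positivity
    refine ⟨δ, hδpos, fun x hx => ?_⟩
    have hlt : infConvE f g x < ((m + 2 * δ : ℝ) : EReal) := by
      refine lt_of_le_of_lt hx ?_
      rw [hma, ← EReal.coe_add]
      exact_mod_cast by linarith
    obtain ⟨r, ⟨y', z', hyzx, rfl⟩, hrlt⟩ := sInf_lt_iff.1 hlt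
    have hfyt : f y' ≠ ⊤ := aux_ne_top (hgbot _) hrlt
    have hgzt : g z' ≠ ⊤ := by
      rw [add_comm] at hrlt; exact aux_ne_top (hfbot _) hrlt
    set pp : ℝ := (f y').toReal with hppdef
    set qq : ℝ := (g z').toReal with hqqdef
    have hpp : (pp : EReal) = f y' := EReal.coe_toReal hfyt (hfbot _)
    have hqq : (qq : EReal) = g z' := EReal.coe_toReal hgzt (hgbot _)
    have hsumlt : pp + qq < m + 2 * δ := by
      rw [← hpp, ← hqq, ← EReal.coe_add] at hrlt
      exact_mod_cast hrlt
    have hPle : P ≤ pp := by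
      have := hfmin y'; rw [← hP, ← hpp] at this; exact_mod_cast this
    have hQle : Q ≤ qq := by
      have := hgmin z'; rw [← hQ, ← hqq] at this; exact_mod_cast this
    have h2δ1 : 2 * δ ≤ δ1 := by
      rw [hδdef]; have := min_le_left δ1 δ2; linarith
    have h2δ2 : 2 * δ ≤ δ2 := by
      rw [hδdef]; have := min_le_right δ1 δ2; linarith
    have hdy : dist y' ty ≤ ε / 2 := by
      refine hf1 y' ?_
      rw [← hpp, ← hP, ← EReal.coe_add]
      exact_mod_cast by linarith [hmdef]
    have hdz : dist z' tz ≤ ε / 2 := by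
      refine hg2 z' ?_
      rw [← hqq, ← hQ, ← EReal.coe_add]
      exact_mod_cast by linarith [hmdef]
    calc dist x a = dist (y' * z') (ty * tz) := by rw [hyzx, hab]
      _ ≤ dist (y' * z') (ty * z') + dist (ty * z') (ty * tz) := dist_triangle _ _ _
      _ = dist y' ty + dist z' tz := by rw [hright, hleft]
      _ ≤ ε := by linarith
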